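/- Let f : [a, b] → ℝ be twice differentiable with ‖f‖_∞ ≤ δ and ‖f''‖_∞ ≤ M on [a, b], where b - a > 0. Then ‖f'‖_∞ ≤ 2δ/(b - a) + 2·√(M·δ). (Consequently, if h̃, h ∈ C²([a,b]) have second derivatives bounded by a common constant and ‖h̃ - h‖_∞ ≤ δ, then ‖h̃' - h'‖_∞ = O(√δ).) -/

import Mathlib

open Set

/-- Right-sided Taylor remainder bound. -/
lemma taylor2_right (a b M : ℝ) (f f' f'' : ℝ → ℝ)
    (hd1 : ∀ x ∈ Icc a b, HasDerivWithinAt f (f' x) (Icc a b) x)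
    (hd2 : ∀ x ∈ Icc a b, HasDerivWithinAt f' (f'' x) (Icc a b) x)
    (hf'' : ∀ x ∈ Icc a b, |f'' x| ≤ M)
    {x y : ℝ} (hx : x ∈ Icc a b) (hy : y ∈ Icc a b) (hxy : x ≤ y) :
    |f y - f x - f' x * (y - x)| ≤ M * (y - x) ^ 2 / 2 := by
  have hsub : Icc x y ⊆ Icc a b := Icc_subset_Icc hx.1 hy.2
  -- step 1 : bound on f' t - f' x
  have step1 : ∀ t ∈ Icc x y, ‖f' t - f' x‖ ≤ M * (t - x) := by
    refine norm_image_sub_le_of_norm_deriv_le_segment'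
      (f' := f'') (fun t ht => (hd2 t (hsub ht)).mono hsub) (fun t ht => ?_)
    exact hf'' t (hsub (Ico_subset_Icc_self ht))
  -- step 2 : fencing
  set g : ℝ → ℝ := fun t => f t - f x - f' x * (t - x) with hg_def
  have hgderiv : ∀ t ∈ Icc x y, HasDerivWithinAt g (f' t - f' x) (Icc x y) t := by
    intro t ht
    have h1 : HasDerivWithinAt f (f' t) (Icc x y) t := (hd1 t (hsub ht)).mono hsub
    have h2 : HasDerivWithinAt (fun u => f x + f' x * (u - x)) (f' x) (Icc x y) t := by
      simpa using ((hasDerivWithinAt_id t (Icc x y)).sub_const x).const_mul (f' x)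
        |>.const_add (f x)
    simpa [hg_def, sub_sub, Pi.sub_def] using h1.sub h2
  have hB : ∀ t : ℝ, HasDerivAt (fun u => M * (u - x) ^ 2 / 2) (M * (t - x)) t := by
    intro t
    have : HasDerivAt (fun u : ℝ => M * (u - x) ^ 2 / 2)
        (M * (2 * (t - x) ^ 1 * 1) / 2) t := by
      exact (((hasDerivAt_id t).sub_const x).pow 2).const_mul M |>.div_const 2
    simpa using this.congr_deriv (by ring)
  have key : ∀ z ∈ Icc x y, ‖g z‖ ≤ M * (z - x) ^ 2 / 2 := by
    intro z hz
    refine image_norm_le_of_norm_deriv_right_le_deriv_boundary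
      (f' := fun t => f' t - f' x)
      (fun t ht => (hgderiv t ht).continuousWithinAt)
      (fun t ht => ?_) (by simp [hg_def]) hB (fun t ht => step1 t (Ico_subset_Icc_self ht)) hz
    exact ((hgderiv t (Ico_subset_Icc_self ht)).mono_of_mem_nhdsWithin
      (Icc_mem_nhdsGE_of_mem ht))
  simpa [hg_def, Real.norm_eq_abs] using key y (right_mem_Icc.2 hxy)

lemma taylor2_left (a b M : ℝ) (f f' f'' : ℝ → ℝ)
    (hd1 : ∀ x ∈ Icc a b, HasDerivWithinAt f (f' x) (Icc a b) x)
    (hd2 : ∀ x ∈ Icc a b, HasDerivWithinAt f' (f'' x) (Icc a b) x)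
    (hf'' : ∀ x ∈ Icc a b, |f'' x| ≤ M)
    {x y : ℝ} (hx : x ∈ Icc a b) (hy : y ∈ Icc a b) (hxy : y ≤ x) :
    |f y - f x - f' x * (y - x)| ≤ M * (y - x) ^ 2 / 2 := by
  set σ : ℝ → ℝ := fun u => a + b - u with hσ
  have hσmap : MapsTo σ (Icc a b) (Icc a b) := by
    intro u hu; simp only [hσ, mem_Icc] at *; constructor <;> linarith [hu.1, hu.2]
  have hσmem : ∀ u ∈ Icc a b, σ u ∈ Icc a b := fun u hu => hσmap hu
  have hσd : ∀ u : ℝ, HasDerivWithinAt σ (-1) (Icc a b) u := by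
    intro u
    simpa using ((hasDerivWithinAt_id u (Icc a b)).const_sub (a + b))
  have hF1 : ∀ u ∈ Icc a b, HasDerivWithinAt (f ∘ σ) (-(f' (σ u))) (Icc a b) u := by
    intro u hu
    simpa [mul_comm] using (hd1 (σ u) (hσmem u hu)).comp u (hσd u) hσmap
  have hF2 : ∀ u ∈ Icc a b, HasDerivWithinAt (fun v => -(f' (σ v))) (f'' (σ u)) (Icc a b) u := by
    intro u hu
    have := ((hd2 (σ u) (hσmem u hu)).comp u (hσd u) hσmap).neg
    simpa [Function.comp_def, Pi.neg_def, mul_comm] using this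
  have hF'' : ∀ u ∈ Icc a b, |f'' (σ u)| ≤ M := fun u hu => hf'' _ (hσmem u hu)
  have hx' : σ x ∈ Icc a b := hσmem x hx
  have hy' : σ y ∈ Icc a b := hσmem y hy
  have hxy' : σ x ≤ σ y := by simp only [hσ]; linarith
  have := taylor2_right a b M (f ∘ σ) (fun v => -(f' (σ v))) (fun v => f'' (σ v))
    hF1 hF2 hF'' hx' hy' hxy'
  have e1 : σ (σ x) = x := by simp [hσ]
  have e2 : σ (σ y) = y := by simp [hσ]
  have e3 : σ y - σ x = x - y := by simp [hσ]
  simp only [Function.comp, e1, e2, e3] at this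
  calc |f y - f x - f' x * (y - x)| = |f y - f x - -f' x * (x - y)| := by rw [show f y - f x - f' x * (y - x) = f y - f x - -f' x * (x - y) by ring]
    _ ≤ M * (x - y) ^ 2 / 2 := this
    _ = M * (y - x) ^ 2 / 2 := by ring

theorem stmt8 (a b δ M : ℝ) (hab : a < b) (hδ : 0 ≤ δ) (hM : 0 ≤ M)
    (f f' f'' : ℝ → ℝ)
    (hd1 : ∀ x ∈ Set.Icc a b, HasDerivWithinAt f (f' x) (Set.Icc a b) x)
    (hd2 : ∀ x ∈ Set.Icc a b, HasDerivWithinAt f' (f'' x) (Set.Icc a b) x)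
    (hf : ∀ x ∈ Set.Icc a b, |f x| ≤ δ)
    (hf'' : ∀ x ∈ Set.Icc a b, |f'' x| ≤ M) :
    ∀ x ∈ Set.Icc a b, |f' x| ≤ 2 * δ / (b - a) + 2 * Real.sqrt (M * δ) := by
  intro x hx
  have hba : (0:ℝ) < b - a := by linarith
  -- one-sided key bound
  have key : ∀ t : ℝ, 0 < t → t ≤ b - a → |f' x| ≤ 2 * δ / t + M * t / 2 := by
    intro t ht htle
    obtain ⟨u, hua, hub, hux, hxv⟩ : ∃ u, a ≤ u ∧ u + t ≤ b ∧ u ≤ x ∧ x ≤ u + t := by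
      refine ⟨min x (b - t), le_min hx.1 (by linarith), ?_, min_le_left _ _, ?_⟩
      · have := min_le_right x (b - t); linarith
      · rcases le_total x (b - t) with h | h
        · rw [min_eq_left h]; linarith
        · rw [min_eq_right h]; linarith [hx.2]
    have hu_mem : u ∈ Icc a b := ⟨hua, by linarith⟩
    have hv_mem : u + t ∈ Icc a b := ⟨by linarith, hub⟩
    have h1 := taylor2_right a b M f f' f'' hd1 hd2 hf'' hx hv_mem hxv
    have h2 := taylor2_left a b M f f' f'' hd1 hd2 hf'' hx hu_mem hux
    have hfv := abs_le.1 (hf (u + t) hv_mem)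
    have hfu := abs_le.1 (hf u hu_mem)
    have h1' := abs_le.1 h1
    have h2' := abs_le.1 h2
    have hsq : (u + t - x) ^ 2 + (u - x) ^ 2 ≤ t ^ 2 := by nlinarith [hux, hxv]
    have hMsq : M * ((u + t - x) ^ 2 + (u - x) ^ 2) ≤ M * t ^ 2 :=
      mul_le_mul_of_nonneg_left hsq hM
    have hAB : f' x * (u + t - x) - f' x * (u - x) = f' x * t := by ring
    have hmain0 : |f' x * t| ≤ 2 * δ + M * t ^ 2 / 2 := by
      rw [abs_le]
      constructor <;>
        linarith [h1'.1, h1'.2, h2'.1, h2'.2, hfv.1, hfv.2, hfu.1, hfu.2, hMsq, hAB]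
    have hmain : |f' x| * t ≤ 2 * δ + M * t ^ 2 / 2 := by
      rwa [abs_mul, abs_of_pos ht] at hmain0
    calc |f' x| = (|f' x| * t) / t := by field_simp
      _ ≤ (2 * δ + M * t ^ 2 / 2) / t := by gcongr
      _ = 2 * δ / t + M * t / 2 := by field_simp
  rcases eq_or_lt_of_le hδ with hδ0 | hδpos
  · -- δ = 0 : f ≡ 0 hence f' x = 0
    have hf0 : ∀ t ∈ Icc a b, f t = 0 := by
      intro t ht
      have := hf t ht
      rw [← hδ0] at this
      exact abs_nonpos_iff.1 this
    have h0 : HasDerivWithinAt f 0 (Icc a b) x :=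
      (hasDerivWithinAt_const x (Icc a b) (0:ℝ)).congr (fun t ht => hf0 t ht) (hf0 x hx)
    have hud := uniqueDiffOn_Icc hab x hx
    have : f' x = 0 := by
      rw [← (hd1 x hx).derivWithin hud, ← h0.derivWithin hud]
    rw [this, ← hδ0]
    simp
  · rcases eq_or_lt_of_le hM with hM0 | hMpos
    · -- M = 0
      have := key (b - a) hba le_rfl
      rw [← hM0] at this ⊢
      simpa using this
    · set r := Real.sqrt (M * δ) with hr_def
      have hrpos : 0 < r := Real.sqrt_pos.2 (by positivity)
      have hr2 : r ^ 2 = M * δ := Real.sq_sqrt (by positivity)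
      set s := 2 * r / M with hs_def
      have hspos : 0 < s := by positivity
      rcases le_or_gt s (b - a) with h | h
      · have hk := key s hspos h
        have heq : 2 * δ / s + M * s / 2 = 2 * r := by
          rw [hs_def]; field_simp; nlinarith [hr2]
        rw [heq] at hk
        have : (0:ℝ) ≤ 2 * δ / (b - a) := by positivity
        linarith
      · have hk := key (b - a) hba le_rfl
        have hMs : M * (b - a) / 2 ≤ r := by
          have h1 : M * (b - a) ≤ M * s := by nlinarith
          have h2 : M * s = 2 * r := by rw [hs_def]; field_simp
          linarith
        linarith
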